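/- Claim 1.4(1): Let k(*) > 0 and suppose m(1) ≥ (k(*) · m(0))^{k(*)+1}. Let A' ⊆ ℕ with |A'| ≥ m(1), and for each k < k(*) let h_k be a function from A' into ℕ with h_k(i) ≥ i for all i ∈ A'. Then there is A'' ⊆ A' with |A''| ≥ m(0) such that for each k < k(*): either for all i, j ∈ A'' with i < j one has h_k(i) ≥ j, or for all i, j ∈ A'' with i < j one has h_k(i) < j. -/

import Mathlib

open Finset

/-- candidates: chains ending at `i` inside `B` -/
private def cand (h : ℕ → ℕ) (B : Finset ℕ) (i : ℕ) : Finset (Finset ℕ) :=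
  B.powerset.filter (fun C => i ∈ C ∧ (∀ x ∈ C, x ≤ i) ∧
    ∀ a ∈ C, ∀ b ∈ C, a < b → h a < b)

private def rnk (h : ℕ → ℕ) (B : Finset ℕ) (i : ℕ) : ℕ :=
  (cand h B i).sup Finset.card

private lemma singleton_mem_cand {h : ℕ → ℕ} {B : Finset ℕ} {i : ℕ} (hi : i ∈ B) :
    {i} ∈ cand h B i := by
  simp [cand, Finset.mem_filter, Finset.mem_powerset, Finset.singleton_subset_iff, hi]

private lemma rnk_pos {h : ℕ → ℕ} {B : Finset ℕ} {i : ℕ} (hi : i ∈ B) :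
    1 ≤ rnk h B i := by
  have h1 := Finset.le_sup (f := Finset.card) (singleton_mem_cand (h := h) hi)
  rwa [Finset.card_singleton] at h1

private lemma rnk_mono {h : ℕ → ℕ} {B : Finset ℕ} {i j : ℕ} (hi : i ∈ B) (hj : j ∈ B)
    (hij : i < j) : rnk h B i ≤ rnk h B j := by
  apply Finset.sup_le
  intro C hC
  simp only [cand, Finset.mem_filter, Finset.mem_powerset] at hC
  obtain ⟨hCB, hiC, hle, hch⟩ := hC
  have hjC : j ∉ C.erase i := by
    intro hmem
    exact absurd (hle j (Finset.mem_of_mem_erase hmem)) (not_le.2 hij)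
  have hmem : insert j (C.erase i) ∈ cand h B j := by
    simp only [cand, Finset.mem_filter, Finset.mem_powerset]
    refine ⟨?_, Finset.mem_insert_self _ _, ?_, ?_⟩
    · intro x hx
      rcases Finset.mem_insert.1 hx with rfl | hx
      · exact hj
      · exact hCB (Finset.mem_of_mem_erase hx)
    · intro x hx
      rcases Finset.mem_insert.1 hx with rfl | hx
      · exact le_rfl
      · exact le_trans (hle x (Finset.mem_of_mem_erase hx)) hij.le
    · intro a ha b hb hab
      rcases Finset.mem_insert.1 hb with hb' | hb'
      · rcases Finset.mem_insert.1 ha with ha' | ha'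
        · exfalso; omega
        · have hai : a < i :=
            lt_of_le_of_ne (hle a (Finset.mem_of_mem_erase ha')) (Finset.ne_of_mem_erase ha')
          exact hb' ▸ lt_trans (hch a (Finset.mem_of_mem_erase ha') i hiC hai) hij
      · rcases Finset.mem_insert.1 ha with ha' | ha'
        · have hbi : b ≤ i := hle b (Finset.mem_of_mem_erase hb')
          exact absurd (ha' ▸ hab) (not_lt.2 (le_trans hbi hij.le))
        · exact hch a (Finset.mem_of_mem_erase ha') b (Finset.mem_of_mem_erase hb') hab
  have hcard : C.card ≤ (insert j (C.erase i)).card := by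
    have hCpos : 0 < C.card := Finset.card_pos.2 ⟨i, hiC⟩
    rw [Finset.card_insert_of_notMem hjC, Finset.card_erase_of_mem hiC]
    omega
  calc C.card ≤ (insert j (C.erase i)).card := hcard
    _ ≤ rnk h B j := Finset.le_sup (f := Finset.card) hmem

private lemma rnk_lt_of_small {h : ℕ → ℕ} {B : Finset ℕ} {i j : ℕ} (hi : i ∈ B) (hj : j ∈ B)
    (hij : i < j) (hsm : h i < j) : rnk h B i < rnk h B j := by
  obtain ⟨C, hC, hrank⟩ := Finset.exists_mem_eq_sup (cand h B i)
    ⟨{i}, singleton_mem_cand hi⟩ Finset.card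
  simp only [cand, Finset.mem_filter, Finset.mem_powerset] at hC
  obtain ⟨hCB, hiC, hle, hch⟩ := hC
  have hjC : j ∉ C := fun hmem => absurd (hle j hmem) (not_le.2 hij)
  have hmem : insert j C ∈ cand h B j := by
    simp only [cand, Finset.mem_filter, Finset.mem_powerset]
    refine ⟨?_, Finset.mem_insert_self _ _, ?_, ?_⟩
    · intro x hx
      rcases Finset.mem_insert.1 hx with rfl | hx
      · exact hj
      · exact hCB hx
    · intro x hx
      rcases Finset.mem_insert.1 hx with rfl | hx
      · exact le_rfl
      · exact le_trans (hle x hx) hij.le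
    · intro a ha b hb hab
      rcases Finset.mem_insert.1 hb with hb' | hb'
      · rcases Finset.mem_insert.1 ha with ha' | ha'
        · exfalso; omega
        · rcases eq_or_lt_of_le (hle a ha') with hai | hai
          · exact hb' ▸ hai ▸ hsm
          · exact hb' ▸ lt_trans (hch a ha' i hiC hai) hij
      · rcases Finset.mem_insert.1 ha with ha' | ha'
        · exact absurd (ha' ▸ hab) (not_lt.2 (le_trans (hle b hb') hij.le))
        · exact hch a ha' b hb' hab
  have h2 : C.card + 1 ≤ rnk h B j := by
    have h3 := Finset.le_sup (f := Finset.card) hmem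
    rwa [Finset.card_insert_of_notMem hjC] at h3
  have h4 : rnk h B i = C.card := hrank
  omega

/-- equal ranks give a "large" pair -/
private lemma rnk_large {h : ℕ → ℕ} {B : Finset ℕ} {i j : ℕ} (hi : i ∈ B) (hj : j ∈ B)
    (hij : i < j) (heq : rnk h B i = rnk h B j) : j ≤ h i := by
  by_contra hc
  exact absurd heq (Nat.ne_of_lt (rnk_lt_of_small hi hj hij (not_le.1 hc)))

/-- a long chain exists when the rank is large -/
private lemma exists_chain {h : ℕ → ℕ} {B : Finset ℕ} {i : ℕ} (hi : i ∈ B) :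
    ∃ C : Finset ℕ, C ⊆ B ∧ (∀ a ∈ C, ∀ b ∈ C, a < b → h a < b) ∧ rnk h B i ≤ C.card := by
  obtain ⟨C, hC, hrank⟩ := Finset.exists_mem_eq_sup (cand h B i)
    ⟨{i}, singleton_mem_cand hi⟩ Finset.card
  simp only [cand, Finset.mem_filter, Finset.mem_powerset] at hC
  exact ⟨C, hC.1, hC.2.2.2, le_of_eq hrank⟩

private lemma main_lemma (h : ℕ → ℕ → ℕ) (K m : ℕ) (hm : 1 ≤ m) :
    ∀ r : ℕ, ∀ S : Finset ℕ, S.card = r → (∀ k ∈ S, k < K) →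
    ∀ B : Finset ℕ, (K * m) ^ r * m ≤ B.card →
    ∃ A'' : Finset ℕ, A'' ⊆ B ∧ m ≤ A''.card ∧ ∀ k ∈ S,
      (∀ i ∈ A'', ∀ j ∈ A'', i < j → j ≤ h k i) ∨
      (∀ i ∈ A'', ∀ j ∈ A'', i < j → h k i < j) := by
  intro r
  induction r with
  | zero =>
    intro S hS _ B hB
    refine ⟨B, Finset.Subset.refl _, by simpa using hB, ?_⟩
    intro k hk
    exact absurd (Finset.card_eq_zero.1 hS ▸ hk) (Finset.notMem_empty k)
  | succ r ih =>
    intro S hS hSK B hB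
    set L : ℕ := (K * m) ^ r * m with hL
    have hK : 1 ≤ K := by
      have hScard : 0 < S.card := by rw [hS]; exact Nat.succ_pos r
      obtain ⟨k0, hk0⟩ := Finset.card_pos.1 hScard
      exact Nat.lt_of_le_of_lt (Nat.zero_le k0) (hSK k0 hk0)
    have hKm : 1 ≤ K * m := Nat.one_le_iff_ne_zero.2 (by positivity)
    have hLpos : 1 ≤ L := Nat.le_trans hm (Nat.le_mul_of_pos_left m ((Nat.pow_pos hKm : 0 < (K * m) ^ r)))
    by_cases hcase : ∃ k0 ∈ S, ∃ i0 ∈ B, L ≤ rnk (h k0) B i0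
    · obtain ⟨k0, hk0S, i0, hi0, hrk⟩ := hcase
      obtain ⟨C, hCB, hch, hrC⟩ := exists_chain (h := h k0) hi0
      have hCcard : (K * m) ^ r * m ≤ C.card := le_trans hrk hrC
      obtain ⟨A'', hA''C, hA''card, hA''hom⟩ :=
        ih (S.erase k0) (by rw [Finset.card_erase_of_mem hk0S, hS]; rfl)
          (fun k hk => hSK k (Finset.mem_of_mem_erase hk)) C hCcard
      refine ⟨A'', hA''C.trans hCB, hA''card, ?_⟩
      intro k hk
      by_cases hkk0 : k = k0
      · subst hkk0
        exact Or.inr (fun i hi j hj hij => hch i (hA''C hi) j (hA''C hj) hij)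
      · exact hA''hom k (Finset.mem_erase.2 ⟨hkk0, hk⟩)
    · push_neg at hcase
      -- all ranks are ≤ L - 1; pigeonhole on the sum of ranks
      have hrank_ub : ∀ k ∈ S, ∀ i ∈ B, rnk (h k) B i ≤ L - 1 := by
        intro k hk i hi
        have := hcase k hk i hi
        omega
      set σ : ℕ → ℕ := fun i => ∑ k ∈ S, rnk (h k) B i with hσ
      have hBne : B.Nonempty := by
        refine Finset.card_pos.1 ?_
        have : 1 ≤ (K * m) ^ (r + 1) * m := Nat.le_trans hm
          (Nat.le_mul_of_pos_left m (Nat.pow_pos hKm))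
        omega
      have hmaps : ∀ i ∈ B, σ i ∈ B.image σ := fun i hi => Finset.mem_image_of_mem σ hi
      have himg_card : (B.image σ).card ≤ (K * m) ^ (r + 1) := by
        have hsub : B.image σ ⊆ Finset.Icc (r + 1) ((r + 1) * (L - 1)) := by
          intro y hy
          obtain ⟨i, hi, rfl⟩ := Finset.mem_image.1 hy
          rw [Finset.mem_Icc]
          constructor
          · calc r + 1 = S.card * 1 := by rw [hS, mul_one]
              _ ≤ ∑ k ∈ S, rnk (h k) B i :=
                Finset.card_nsmul_le_sum S _ 1 (fun k hk => rnk_pos hi)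
          · calc ∑ k ∈ S, rnk (h k) B i ≤ S.card * (L - 1) :=
                Finset.sum_le_card_nsmul S _ (L - 1) (fun k hk => hrank_ub k hk i hi)
              _ = (r + 1) * (L - 1) := by rw [hS]
        have h1 : (B.image σ).card ≤ (r + 1) * (L - 1) + 1 - (r + 1) := by
          have := Finset.card_le_card hsub
          rwa [Nat.card_Icc] at this
        have h2 : r + 1 ≤ K := by
          have : S ⊆ Finset.range K := fun k hk => Finset.mem_range.2 (hSK k hk)
          have := Finset.card_le_card this
          rwa [hS, Finset.card_range] at this
        have h3 : (r + 1) * (L - 1) + 1 ≤ (r + 1) * L := by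
          have : (r+1) * (L-1) + (r+1) = (r+1) * L := by
            rw [← Nat.mul_succ]
            congr 1
            omega
          omega
        have h4 : (r + 1) * L ≤ K * L := Nat.mul_le_mul_right L h2
        have h5 : K * L = (K * m) ^ (r + 1) := by
          rw [hL, pow_succ]
          ring
        omega
      have hcard_mul : (B.image σ).card * m ≤ B.card := by
        calc (B.image σ).card * m ≤ (K * m) ^ (r + 1) * m := Nat.mul_le_mul_right m himg_card
          _ ≤ B.card := hB
      obtain ⟨y, hy, hycard⟩ := Finset.exists_le_card_fiber_of_mul_le_card_of_maps_to
        hmaps (hBne.image σ) hcard_mul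
      refine ⟨B.filter (fun i => σ i = y), Finset.filter_subset _ _, hycard, ?_⟩
      intro k hk
      left
      intro i hi j hj hij
      have hiB := Finset.mem_of_mem_filter i hi
      have hjB := Finset.mem_of_mem_filter j hj
      have hσi : σ i = y := (Finset.mem_filter.1 hi).2
      have hσj : σ j = y := (Finset.mem_filter.1 hj).2
      have hsum : ∑ k ∈ S, rnk (h k) B i = ∑ k ∈ S, rnk (h k) B j := by
        simp only [hσ] at hσi hσj
        omega
      have heach : ∀ k' ∈ S, rnk (h k') B i = rnk (h k') B j :=
        (Finset.sum_eq_sum_iff_of_le (fun k' hk' => rnk_mono hiB hjB hij)).1 hsum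
      exact rnk_large hiB hjB hij (heach k hk)

/-- Claim 1.4(1): if `m₁ ≥ (k* · m₀)^{k*+1}` and `A' ⊆ ℕ` has at least `m₁`
elements, and for each `k < k*`, `h k` satisfies `h k i ≥ i` on `A'`, then there
is `A'' ⊆ A'` of size at least `m₀` on which each `h k` is uniformly "large"
(`h k i ≥ j` for all `i < j` in `A''`) or uniformly "small" (`h k i < j`). -/
theorem claim_1_4_1 (kstar m0 m1 : ℕ) (hk : 0 < kstar)
    (hm : (kstar * m0) ^ (kstar + 1) ≤ m1)
    (A' : Finset ℕ) (hA : m1 ≤ A'.card)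
    (h : ℕ → ℕ → ℕ) (hh : ∀ k < kstar, ∀ i ∈ A', i ≤ h k i) :
    ∃ A'' : Finset ℕ, A'' ⊆ A' ∧ m0 ≤ A''.card ∧
      ∀ k < kstar,
        (∀ i ∈ A'', ∀ j ∈ A'', i < j → j ≤ h k i) ∨
        (∀ i ∈ A'', ∀ j ∈ A'', i < j → h k i < j) := by
  rcases Nat.eq_zero_or_pos m0 with rfl | hm0
  · exact ⟨∅, Finset.empty_subset _, Nat.zero_le _, fun k hk => Or.inl (by simp)⟩
  have hBcard : (kstar * m0) ^ kstar * m0 ≤ A'.card := by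
    have : (kstar * m0) ^ kstar * m0 ≤ (kstar * m0) ^ (kstar + 1) := by
      rw [pow_succ]
      exact Nat.mul_le_mul_left _ (Nat.le_mul_of_pos_left m0 hk)
    omega
  obtain ⟨A'', hsub, hcard, hhom⟩ := main_lemma h kstar m0 hm0 kstar (Finset.range kstar)
    (Finset.card_range kstar) (fun k hk => Finset.mem_range.1 hk) A' hBcard
  exact ⟨A'', hsub, hcard, fun k hk => hhom k (Finset.mem_range.2 hk)⟩
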